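/- arXiv:1602.06617 — 5 statements merged into one kernel-verified Lean document; each statement's English description precedes it below -/
import Mathlib

section
/- Let H = (a_1,…,a_n; ε_1,…,ε_n) be a naive EGK datum of length n, and let σ be the ℚ-algebra automorphism of ℚ(x,y) fixing y and sending x to x^{−1} (i.e. the substitution X ↦ X^{−1}). Then σ(𝓕(H;Y,X)) = η_n · 𝓕(H;Y,X), where η_n = 1 if n is even and η_n = ε_n if n is odd. -/
noncomputable section

/-- The ambient field `ℚ(x,y)`. -/
abbrev KK : Type := FractionRing (MvPolynomial (Fin 2) ℚ)

/-- `x = X^{1/2}`. -/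
def xx : KK := algebraMap (MvPolynomial (Fin 2) ℚ) KK (MvPolynomial.X 0)

/-- `y = Y^{1/2}`. -/
def yy : KK := algebraMap (MvPolynomial (Fin 2) ℚ) KK (MvPolynomial.X 1)

/-- The invariant `𝔢_i` attached to the sequence `a` (indexed from 1). -/
def eInv (a : ℕ → ℕ) (i : ℕ) : ℤ :=
  if Odd i then ((∑ j ∈ Finset.Icc 1 i, a j : ℕ) : ℤ)
  else 2 * (((∑ j ∈ Finset.Icc 1 i, a j : ℕ) / 2 : ℕ) : ℤ)

/-- `C(e,ẽ,ξ;Y,X)`, written in terms of the square root `u = X^{1/2}` (and `Y = yy²`). -/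
def Cfun (e et : ℤ) (ξ : ℤ) (u : KK) : KK :=
  yy ^ et * u ^ (-(e - et) - 2) * (1 - (ξ : KK) * yy ^ (-2 : ℤ) * u ^ (2 : ℤ)) /
    (u ^ (-2 : ℤ) - u ^ (2 : ℤ))

/-- `D(e,ẽ,ξ;Y,X)`, in terms of `u = X^{1/2}`. -/
def Dfun (e et : ℤ) (ξ : ℤ) (u : KK) : KK :=
  yy ^ et * u ^ (-(e - et)) / (1 - (ξ : KK) * u ^ (2 : ℤ))

/-- `C_i`: equals `C` if `i` is even and `D` if `i` is odd. -/
def CD (i : ℕ) (e et : ℤ) (ξ : ℤ) (u : KK) : KK :=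
  if Even i then Cfun e et ξ u else Dfun e et ξ u

/-- The rational function `𝓕(H;Y,X)`, as a function of `u = X^{1/2}` (with `Y = yy²` fixed). -/
def Fcal (a : ℕ → ℕ) (ε : ℕ → ℤ) : ℕ → KK → KK
  | 0, _ => 1
  | 1, u => ∑ i ∈ Finset.range (a 1 + 1), u ^ (2 * (i : ℤ) - (a 1 : ℤ))
  | (m + 2), u =>
      CD (m + 2) (eInv a (m + 2)) (eInv a (m + 1))
          (if Even (m + 2) then ε (m + 2) else ε (m + 1)) u
        * Fcal a ε (m + 1) (yy * u)
      + (if Even (m + 2) then 1 else (ε (m + 2) : KK))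
        * CD (m + 2) (eInv a (m + 2)) (eInv a (m + 1))
            (if Even (m + 2) then ε (m + 2) else ε (m + 1)) u⁻¹
        * Fcal a ε (m + 1) (yy * u⁻¹)

/-- A naive EGK datum of length `n` (entries indexed by `1,…,n`). -/
structure IsNaiveEGK (n : ℕ) (a : ℕ → ℕ) (ε : ℕ → ℤ) : Prop where
  mono : ∀ i, 1 ≤ i → i + 1 ≤ n → a i ≤ a (i + 1)
  mem : ∀ i, 1 ≤ i → i ≤ n → ε i = 0 ∨ ε i = 1 ∨ ε i = -1
  n2 : ∀ i, 1 ≤ i → i ≤ n → Even i → (ε i ≠ 0 ↔ Even (∑ j ∈ Finset.Icc 1 i, a j))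
  n3 : ∀ i, 1 ≤ i → i ≤ n → Odd i → ε i ≠ 0
  n4 : 1 ≤ n → ε 1 = 1
  n5 : ∀ i, 3 ≤ i → i ≤ n → Odd i → Even (∑ j ∈ Finset.Icc 1 (i - 1), a j) →
    ε i = ε (i - 1) ^ (a i + a (i - 1)) * ε (i - 2)
/-- `η_j`. -/
def etav (ε : ℕ → ℤ) (j : ℕ) : ℤ := if Even j then 1 else ε j

lemma map_Cfun (σ : KK ≃ₐ[ℚ] KK) (hy : σ yy = yy) (e et ξ : ℤ) (u : KK) :
    σ (Cfun e et ξ u) = Cfun e et ξ (σ u) := by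
  simp [Cfun, map_div₀, map_zpow₀, hy]

lemma map_Dfun (σ : KK ≃ₐ[ℚ] KK) (hy : σ yy = yy) (e et ξ : ℤ) (u : KK) :
    σ (Dfun e et ξ u) = Dfun e et ξ (σ u) := by
  simp [Dfun, map_div₀, map_zpow₀, hy]

lemma map_CD (σ : KK ≃ₐ[ℚ] KK) (hy : σ yy = yy) (i : ℕ) (e et ξ : ℤ) (u : KK) :
    σ (CD i e et ξ u) = CD i e et ξ (σ u) := by
  unfold CD; split_ifs
  · exact map_Cfun σ hy e et ξ u
  · exact map_Dfun σ hy e et ξ u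

lemma map_Fcal (σ : KK ≃ₐ[ℚ] KK) (hy : σ yy = yy) (a : ℕ → ℕ) (ε : ℕ → ℤ) :
    ∀ n : ℕ, ∀ u : KK, σ (Fcal a ε n u) = Fcal a ε n (σ u)
  | 0, u => by simp [Fcal]
  | 1, u => by simp [Fcal, map_sum, map_zpow₀]
  | (m + 2), u => by
      simp only [Fcal, map_add, map_mul, map_CD σ hy, map_inv₀, map_mul, hy,
        map_Fcal σ hy a ε (m + 1)]
      split_ifs <;> simp

lemma Fcal_inv_one (a : ℕ → ℕ) (ε : ℕ → ℤ) (u : KK) :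
    Fcal a ε 1 u⁻¹ = Fcal a ε 1 u := by
  simp only [Fcal]
  rw [← Finset.sum_range_reflect]
  refine Finset.sum_congr rfl fun i hi => ?_
  have hi' : i ≤ a 1 := Nat.lt_succ_iff.mp (Finset.mem_range.mp hi)
  rw [inv_zpow, ← zpow_neg]
  congr 1
  have : ((a 1 + 1 - 1 - i : ℕ) : ℤ) = (a 1 : ℤ) - i := by omega
  rw [this]; ring

lemma Fcal_inv_two (a : ℕ → ℕ) (ε : ℕ → ℤ) (m : ℕ)
    (hζ : ((etav ε (m + 2) : ℤ) : KK) * ((etav ε (m + 2) : ℤ) : KK) = 1) (u : KK) :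
    Fcal a ε (m + 2) u⁻¹ = ((etav ε (m + 2) : ℤ) : KK) * Fcal a ε (m + 2) u := by
  simp only [Fcal, inv_inv, etav] at *
  split_ifs at * with h
  · push_cast; ring
  · linear_combination (-1 : KK) * (CD (m + 2) (eInv a (m + 2)) (eInv a (m + 1)) (ε (m + 1)) u⁻¹ *
      Fcal a ε (m + 1) (yy * u⁻¹)) * hζ

theorem statement_1 (n : ℕ) (hn : 1 ≤ n) (a : ℕ → ℕ) (ε : ℕ → ℤ)
    (H : IsNaiveEGK n a ε)
    (σ : KK ≃ₐ[ℚ] KK) (hx : σ xx = xx⁻¹) (hy : σ yy = yy) :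
    σ (Fcal a ε n xx) = (etav ε n : KK) * Fcal a ε n xx := by
  rw [map_Fcal σ hy, hx]
  match n, hn with
  | 1, _ =>
    rw [Fcal_inv_one]
    have h1 : etav ε 1 = 1 := by simp [etav, H.n4 le_rfl]
    rw [h1]; push_cast; ring
  | (m + 2), _ =>
    apply Fcal_inv_two
    unfold etav
    split_ifs with h
    · norm_num
    · have hodd : Odd (m + 2) := Nat.not_even_iff_odd.mp h
      have hne : ε (m + 2) ≠ 0 := H.n3 (m + 2) (by omega) le_rfl hodd
      rcases H.mem (m + 2) (by omega) le_rfl with h0 | h1 | h2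
      · exact absurd h0 hne
      · rw [h1]; norm_num
      · rw [h2]; norm_num

end
end

section
/- Let H = (a_1,…,a_n; ε_1,…,ε_n) be a naive EGK datum of length n ≥ 2 with a_{n−1} = a_n, and let H'' = (a_1,…,a_{n−2}; ε_1,…,ε_{n−2}) (a naive EGK datum of length n−2, with the convention 𝓕(H'';Y,X) = 1 when n = 2). Assume n is even and a_1+⋯+a_n is odd. Then 𝓕(H;Y,X) = Y^{𝔢_{n−2}} { X^{(−𝔢_n+𝔢_{n−2})/2−1}/(X^{−1}−X) · 𝓕(H'';Y,Y²X) + X^{(𝔢_n−𝔢_{n−2})/2+1}/(X−X^{−1}) · 𝓕(H'';Y,Y²X^{−1}) }. In particular, 𝓕(H;Y,X) does not depend on ε_{n−1}. -/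
noncomputable section

lemma Fcal_step (a : ℕ → ℕ) (ε : ℕ → ℤ) (m : ℕ) (u : KK) :
    Fcal a ε (m + 2) u =
      CD (m + 2) (eInv a (m + 2)) (eInv a (m + 1))
          (if Even (m + 2) then ε (m + 2) else ε (m + 1)) u
        * Fcal a ε (m + 1) (yy * u)
      + (if Even (m + 2) then 1 else (ε (m + 2) : KK))
        * CD (m + 2) (eInv a (m + 2)) (eInv a (m + 1))
            (if Even (m + 2) then ε (m + 2) else ε (m + 1)) u⁻¹
        * Fcal a ε (m + 1) (yy * u⁻¹) := by
  rw [Fcal]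

lemma hinj : Function.Injective (algebraMap (MvPolynomial (Fin 2) ℚ) KK) :=
  IsFractionRing.injective _ _
lemma hx : xx ≠ 0 := by
  intro h
  have : (MvPolynomial.X 0 : MvPolynomial (Fin 2) ℚ) = 0 := hinj (by rw [map_zero]; exact h)
  exact MvPolynomial.X_ne_zero _ this
lemma hy : yy ≠ 0 := by
  intro h
  have : (MvPolynomial.X 1 : MvPolynomial (Fin 2) ℚ) = 0 := hinj (by rw [map_zero]; exact h)
  exact MvPolynomial.X_ne_zero _ this
lemma h4 : xx ^ 4 ≠ 1 := by
  intro h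
  have h2 : (MvPolynomial.X 0 : MvPolynomial (Fin 2) ℚ) ^ 4 = 1 := by
    apply hinj; rw [map_pow, map_one]; exact h
  have := congrArg (MvPolynomial.eval fun _ => (2:ℚ)) h2
  simp at this
  norm_num at this
lemma h4' : (xx ^ 2)⁻¹ - xx ^ 2 ≠ 0 := by
  intro h
  have h1 : (xx ^ 2)⁻¹ = xx ^ 2 := sub_eq_zero.mp h
  apply h4
  have : xx ^ 2 * (xx ^ 2)⁻¹ = 1 := mul_inv_cancel₀ (pow_ne_zero 2 hx)
  rw [h1] at this
  rw [← this]; ring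
lemma h4'' : xx ^ 2 - (xx ^ 2)⁻¹ ≠ 0 :=
  sub_ne_zero.mpr (Ne.symm (sub_ne_zero.mp h4'))

lemma Fcal_even_inv (a : ℕ → ℕ) (ε : ℕ → ℤ) (m : ℕ) (hm : Even (m + 2)) (u : KK) :
    Fcal a ε (m + 2) u⁻¹ = Fcal a ε (m + 2) u := by
  rw [Fcal_step, Fcal_step, inv_inv, if_pos hm, if_pos hm]
  ring

lemma Fcal_step_even (a : ℕ → ℕ) (ε : ℕ → ℤ) (m : ℕ) (hm : Even (m + 2)) (u : KK) :
    Fcal a ε (m + 2) u =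
      Cfun (eInv a (m + 2)) (eInv a (m + 1)) (ε (m + 2)) u * Fcal a ε (m + 1) (yy * u)
      + Cfun (eInv a (m + 2)) (eInv a (m + 1)) (ε (m + 2)) u⁻¹ * Fcal a ε (m + 1) (yy * u⁻¹) := by
  rw [Fcal_step]
  simp only [CD, if_pos hm, one_mul]

lemma Fcal_step_odd (a : ℕ → ℕ) (ε : ℕ → ℤ) (m : ℕ) (hm : ¬ Even (m + 2)) (u : KK) :
    Fcal a ε (m + 2) u =
      Dfun (eInv a (m + 2)) (eInv a (m + 1)) (ε (m + 1)) u * Fcal a ε (m + 1) (yy * u)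
      + (ε (m + 2) : KK) * Dfun (eInv a (m + 2)) (eInv a (m + 1)) (ε (m + 1)) u⁻¹
        * Fcal a ε (m + 1) (yy * u⁻¹) := by
  rw [Fcal_step]
  simp only [CD, if_neg hm]

lemma Fcal_congr (a : ℕ → ℕ) (ε ε' : ℕ → ℤ) :
    ∀ k, (∀ j, j ≤ k → ε' j = ε j) → ∀ u, Fcal a ε' k u = Fcal a ε k u := by
  intro k
  induction k using Nat.strong_induction_on with
  | _ k ih =>
    match k with
    | 0 => intro _ u; rfl
    | 1 => intro _ u; rfl
    | (m+2) =>
      intro h u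
      rw [Fcal_step, Fcal_step, h (m+2) le_rfl, h (m+1) (by omega),
        ih (m+1) (by omega) (fun j hj => h j (by omega)) (yy * u),
        ih (m+1) (by omega) (fun j hj => h j (by omega)) (yy * u⁻¹)]

set_option maxHeartbeats 1000000 in
lemma main (m : ℕ) (hm : m % 2 = 0) (a : ℕ → ℕ) (ε : ℕ → ℤ)
    (H : IsNaiveEGK (m+4) a ε) (hlast : a (m+3) = a (m+4))
    (hodd : Odd (∑ j ∈ Finset.Icc 1 (m+4), a j)) :
    Fcal a ε (m+4) xx =
      (yy ^ 2) ^ (eInv a (m+2)) *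
        (xx ^ (-(eInv a (m+4)) + eInv a (m+2) - 2) / ((xx ^ 2)⁻¹ - xx ^ 2) *
            Fcal a ε (m+2) (yy ^ 2 * xx) +
          xx ^ (eInv a (m+4) - eInv a (m+2) + 2) / (xx ^ 2 - (xx ^ 2)⁻¹) *
            Fcal a ε (m+2) (yy ^ 2 * xx⁻¹)) := by
  rw [Nat.odd_iff] at hodd
  have hsum3 : (∑ j ∈ Finset.Icc 1 (m+3), a j) = (∑ j ∈ Finset.Icc 1 (m+2), a j) + a (m+3) :=
    Finset.sum_Icc_succ_top (by omega) a
  have hsum4 : (∑ j ∈ Finset.Icc 1 (m+4), a j) = (∑ j ∈ Finset.Icc 1 (m+2), a j) + a (m+3) + a (m+4) := by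
    rw [Finset.sum_Icc_succ_top (by omega) a, hsum3]
  set S := ∑ j ∈ Finset.Icc 1 (m+2), a j with hSdef
  set A := a (m+4) with hAdef
  rw [hsum4, hlast] at hodd
  have hS : S % 2 = 1 := by omega
  have hε4 : ε (m+4) = 0 := by
    by_contra hne
    have := (H.n2 (m+4) (by omega) le_rfl (Nat.even_iff.mpr (by omega))).mp hne
    rw [Nat.even_iff, hsum4, hlast] at this
    omega
  have hε2 : ε (m+2) = 0 := by
    by_contra hne
    have := (H.n2 (m+2) (by omega) (by omega) (Nat.even_iff.mpr (by omega))).mp hne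
    rw [Nat.even_iff] at this
    omega
  have he2 : eInv a (m+2) = (S : ℤ) - 1 := by
    rw [eInv, if_neg (by rw [Nat.odd_iff]; omega), ← hSdef]
    omega
  have he3 : eInv a (m+3) = (S : ℤ) + A := by
    rw [eInv, if_pos (by rw [Nat.odd_iff]; omega), hsum3, hlast]
    push_cast; ring
  have he4 : eInv a (m+4) = (S : ℤ) - 1 + 2 * A := by
    rw [eInv, if_neg (by rw [Nat.odd_iff]; omega), hsum4, hlast]
    omega
  have hEv : Even (m + 2 + 2) := Nat.even_iff.mpr (by omega)
  have hOdd2 : ¬ Even (m + 1 + 2) := by rw [Nat.even_iff]; omega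
  rw [he2, he4]
  rw [Fcal_step_even a ε (m+2) hEv xx]
  rw [Fcal_step_odd a ε (m+1) hOdd2 (yy*xx), Fcal_step_odd a ε (m+1) hOdd2 (yy*xx⁻¹)]
  rw [hε4, hε2, he2, he3, he4]
  have ha1 : yy * (yy * xx) = yy^2 * xx := by ring
  have ha2 : yy * (yy * xx⁻¹) = yy^2 * xx⁻¹ := by ring
  have ha3 : yy * (yy * xx)⁻¹ = xx⁻¹ := by
    rw [mul_inv, ← mul_assoc, mul_inv_cancel₀ hy, one_mul]
  have ha4 : yy * (yy * xx⁻¹)⁻¹ = xx := by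
    rw [mul_inv, inv_inv, ← mul_assoc, mul_inv_cancel₀ hy, one_mul]
  rw [ha1, ha2, ha3, ha4]
  rw [Fcal_even_inv a ε m (Nat.even_iff.mpr (by omega)) xx]
  simp only [Cfun, Dfun, Int.cast_zero, zero_mul, mul_zero, sub_zero, div_one, mul_one]
  simp only [show m + 1 + 1 = m + 2 from rfl, show m + 1 + 2 = m + 3 from rfl]
  have hq1 : -(((S:ℕ):ℤ) - 1 + 2*((A:ℕ):ℤ) - (((S:ℕ):ℤ) + ((A:ℕ):ℤ))) - 2 = -(((A+1:ℕ):ℤ)) := by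
    push_cast; ring
  have hq2 : -((((S:ℕ):ℤ)) + ((A:ℕ):ℤ) - (((S:ℕ):ℤ) - 1)) = -(((A+1:ℕ):ℤ)) := by push_cast; ring
  have hq3 : -(((S:ℕ):ℤ) - 1 + 2*((A:ℕ):ℤ)) + (((S:ℕ):ℤ) - 1) - 2 = -(((2*(A+1):ℕ):ℤ)) := by
    push_cast; ring
  have hq4 : ((S:ℕ):ℤ) - 1 + 2*((A:ℕ):ℤ) - (((S:ℕ):ℤ) - 1) + 2 = ((2*(A+1):ℕ):ℤ) := by
    push_cast; ring
  have hq5 : ((S:ℕ):ℤ) + ((A:ℕ):ℤ) = (((S:ℕ):ℤ) - 1) + ((A+1:ℕ):ℤ) := by push_cast; ring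
  rw [hq1, hq2, hq3, hq4, hq5]
  have hyt : (yy^2) ^ (((S:ℕ):ℤ) - 1) = yy ^ (((S:ℕ):ℤ) - 1) * yy ^ (((S:ℕ):ℤ) - 1) := by
    rw [sq yy, mul_zpow]
  rw [hyt]
  simp only [zpow_add₀ hy, zpow_neg, zpow_natCast, inv_zpow, zpow_ofNat, inv_inv]
  have hc : (xx⁻¹ ^ 2)⁻¹ - xx⁻¹ ^ 2 = xx ^ 2 - (xx ^ 2)⁻¹ := by rw [inv_pow, inv_inv]
  rw [hc]
  generalize Fcal a ε (m + 2) (yy ^ 2 * xx) = G1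
  generalize Fcal a ε (m + 2) (yy ^ 2 * xx⁻¹) = G2
  generalize Fcal a ε (m + 2) xx = G
  generalize ((ε (m + 3) : ℤ) : KK) = e3
  generalize hts : yy ^ (((S:ℕ):ℤ) - 1) = t
  generalize hA1 : A + 1 = b
  have hxne := hx
  have hyne := hy
  have hd1 := h4'
  have hd2 := h4''
  have hB : (1:KK) - xx ^ 4 ≠ 0 := fun h => h4 (by linear_combination -h)
  have hB' : xx ^ 4 - 1 ≠ 0 := fun h => h4 (by linear_combination h)
  have hB'' : (-1:KK) + xx ^ 4 ≠ 0 := fun h => h4 (by linear_combination h)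
  have hxb : xx ^ b ≠ 0 := pow_ne_zero _ hx
  have hyb : yy ^ b ≠ 0 := pow_ne_zero _ hy
  have hd2e : xx ^ 2 - (xx ^ 2)⁻¹ = -((xx ^ 2)⁻¹ - xx ^ 2) := by ring
  rw [hd2e]
  simp only [mul_inv, inv_pow, inv_inv, mul_pow, div_neg, neg_div]
  have fac : ∀ c1 c2 : KK, c1 ≠ 0 → c2 ≠ 0 → ∀ e : KK, e = c1 * c2 * (xx ^ 4 - 1) → e ≠ 0 := by
    intro c1 c2 h1 h2 e he
    rw [he]
    exact mul_ne_zero (mul_ne_zero h1 h2) hB'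
  have hxb2 : xx ^ (b*2) ≠ 0 := pow_ne_zero _ hx
  have hc1 : yy ^ b * xx ^ 4 * xx ^ b - yy ^ b * xx ^ b ≠ 0 :=
    fac _ _ hyb hxb _ (by ring)
  have hc1' : -(yy ^ b * xx ^ 4 * xx ^ b) + yy ^ b * xx ^ b ≠ 0 := by
    intro h; exact hc1 (by linear_combination -h)
  have hc2 : yy ^ b * xx ^ 4 * xx ^ (b*2) - yy ^ b * xx ^ (b*2) ≠ 0 :=
    fac _ _ hyb hxb2 _ (by ring)
  have hc2' : -(yy ^ b * xx ^ 4 * xx ^ (b*2)) + yy ^ b * xx ^ (b*2) ≠ 0 := by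
    intro h; exact hc2 (by linear_combination -h)
  have hc3 : xx ^ 4 * xx ^ (b*2) - xx ^ (b*2) ≠ 0 :=
    fac 1 _ one_ne_zero hxb2 _ (by ring)
  have hc3' : -(xx ^ 4 * xx ^ (b*2)) + xx ^ (b*2) ≠ 0 := by
    intro h; exact hc3 (by linear_combination -h)
  field_simp
  have hB2 : (1:KK) - xx ^ 2 * xx ^ 2 ≠ 0 := fun h => h4 (by linear_combination -h)
  have hP : xx ^ b * (1 - xx ^ 2 * xx ^ 2) * (yy ^ b * xx ^ b) ≠ 0 :=
    mul_ne_zero (mul_ne_zero hxb hB2) (mul_ne_zero hyb hxb)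
  have hQ : (1 - xx ^ 2 * xx ^ 2) * (yy ^ b * xx ^ b) ≠ 0 :=
    mul_ne_zero hB2 (mul_ne_zero hyb hxb)
  have hR : xx ^ (2 * b) * (1 - xx ^ 2 * xx ^ 2) ≠ 0 :=
    mul_ne_zero (pow_ne_zero _ hx) hB2
  ring

theorem statement_4 (n : ℕ) (hn : 2 ≤ n) (heven : Even n) (a : ℕ → ℕ) (ε : ℕ → ℤ)
    (H : IsNaiveEGK n a ε) (hlast : a (n - 1) = a n)
    (hodd : Odd (∑ j ∈ Finset.Icc 1 n, a j)) :
    Fcal a ε n xx =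
      (yy ^ 2) ^ (eInv a (n - 2)) *
        (xx ^ (-(eInv a n) + eInv a (n - 2) - 2) / ((xx ^ 2)⁻¹ - xx ^ 2) *
            Fcal a ε (n - 2) (yy ^ 2 * xx) +
          xx ^ (eInv a n - eInv a (n - 2) + 2) / (xx ^ 2 - (xx ^ 2)⁻¹) *
            Fcal a ε (n - 2) (yy ^ 2 * xx⁻¹)) ∧
    ∀ ε' : ℕ → ℤ, IsNaiveEGK n a ε' → (∀ j, j ≠ n - 1 → ε' j = ε j) →
      Fcal a ε' n xx = Fcal a ε n xx := by
  obtain ⟨m, rfl⟩ : ∃ m, n = m + 4 := by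
    refine ⟨n - 4, ?_⟩
    rcases Nat.lt_or_ge n 4 with h | h
    · exfalso
      interval_cases n
      · have hsum : (∑ j ∈ Finset.Icc 1 2, a j) = a 1 + a 2 := by
          rw [Finset.sum_Icc_succ_top (by omega), Finset.Icc_self, Finset.sum_singleton]
        rw [Nat.odd_iff, hsum] at hodd
        have h12 : a 1 = a 2 := hlast
        omega
      · exact absurd heven (by decide)
    · omega
  have hm : m % 2 = 0 := by rw [Nat.even_iff] at heven; omega
  have hlast' : a (m + 3) = a (m + 4) := hlast
  have h1 := main m hm a ε H hlast' hodd
  constructor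
  · exact h1
  · intro ε' H' hee
    have h2 := main m hm a ε' H' hlast' hodd
    have hcg : ∀ j, j ≤ m + 2 → ε' j = ε j := fun j hj => hee j (by omega)
    rw [h1, h2, Fcal_congr a ε ε' (m+2) hcg (yy^2*xx), Fcal_congr a ε ε' (m+2) hcg (yy^2*xx⁻¹)]

end
end

section
/- Let n ≥ 3 and let G be an EGK datum of length n, with associated non-decreasing sequence (a_1,…,a_n). Assume that either (Case 1) n is odd, a_{n−1} = a_n, and a_1+⋯+a_{n−1} is even, or (Case 2) n is even, a_{n−1} = a_n, and a_1+⋯+a_n is odd. Then for any two naive EGK data H_1, H_2 of length n with Υ_n(H_1) = Υ_n(H_2) = G, writing H_i'' for the naive EGK datum of length n−2 obtained from H_i by deleting its last two entries of each tuple, one has Υ_{n−2}(H_1'') = Υ_{n−2}(H_2''). -/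
noncomputable section

/-- `n_s* = n_1 + ⋯ + n_s`. -/
def nstar (nn : ℕ → ℕ) (s : ℕ) : ℕ := ∑ i ∈ Finset.Icc 1 s, nn i

/-- An EGK datum `(n_1,…,n_r; m_1,…,m_r; ζ_1,…,ζ_r)` of length `n` (indexed from 1). -/
structure IsEGK (n r : ℕ) (nn mm : ℕ → ℕ) (ζ : ℕ → ℤ) : Prop where
  r_pos : 1 ≤ r
  nn_pos : ∀ s, 1 ≤ s → s ≤ r → 1 ≤ nn s
  total : nstar nn r = n
  m_mono : ∀ s t, 1 ≤ s → s < t → t ≤ r → mm s < mm t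
  zeta_mem : ∀ s, 1 ≤ s → s ≤ r → ζ s = 0 ∨ ζ s = 1 ∨ ζ s = -1
  e2 : ∀ s, 1 ≤ s → s ≤ r → Even (nstar nn s) →
    (ζ s ≠ 0 ↔ Even (∑ i ∈ Finset.Icc 1 s, mm i * nn i))
  e3_ne : ∀ s, 1 ≤ s → s ≤ r → Odd (nstar nn s) → ζ s ≠ 0
  e3a : ∀ s, 1 ≤ s → s ≤ r → Odd (nstar nn s) →
    (∀ i, 1 ≤ i → i < s → Even (nstar nn i)) →
    ζ s = ∏ i ∈ Finset.Icc 1 (s - 1), ζ i ^ (mm (i + 1) + mm i)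
  e3b : ∀ s t, 1 ≤ t → t < s → s ≤ r → Odd (nstar nn s) → Odd (nstar nn t) →
    (∀ i, t < i → i < s → Even (nstar nn i)) →
    ζ s = ζ t * ∏ i ∈ Finset.Icc (t + 1) (s - 1), ζ i ^ (mm (i + 1) + mm i)

/-- `Υ_n(a_1,…,a_n;ε_1,…,ε_n) = (n_1,…,n_r;m_1,…,m_r;ζ_1,…,ζ_r)`:
the sequence `a` consists of `m_1` repeated `n_1` times, …, `m_r` repeated `n_r` times,
with `m_1 < ⋯ < m_r`, and `ζ_s = ε_{n_s*}`. -/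
def UpsRel (n : ℕ) (a : ℕ → ℕ) (ε : ℕ → ℤ) (r : ℕ) (nn mm : ℕ → ℕ) (ζ : ℕ → ℤ) : Prop :=
  (∀ s, 1 ≤ s → s ≤ r → 1 ≤ nn s) ∧
  nstar nn r = n ∧
  (∀ s t, 1 ≤ s → s < t → t ≤ r → mm s < mm t) ∧
  (∀ s j, 1 ≤ s → s ≤ r → nstar nn (s - 1) < j → j ≤ nstar nn s → a j = mm s) ∧
  (∀ s, 1 ≤ s → s ≤ r → ζ s = ε (nstar nn s))

lemma my_nstar_zero (nn : ℕ → ℕ) : nstar nn 0 = 0 := by simp [nstar]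

lemma my_nstar_succ (nn : ℕ → ℕ) (s : ℕ) : nstar nn (s+1) = nstar nn s + nn (s+1) := by
  simp [nstar, Finset.sum_Icc_succ_top (Nat.le_add_left 1 s)]

lemma my_nstar_mono (nn : ℕ → ℕ) {s t : ℕ} (h : s ≤ t) : nstar nn s ≤ nstar nn t :=
  Finset.sum_le_sum_of_subset (Finset.Icc_subset_Icc_right h)

lemma my_locate (r : ℕ) (nn : ℕ → ℕ) {j : ℕ} (hj1 : 1 ≤ j) (hjn : j ≤ nstar nn r) :
    ∃ s, 1 ≤ s ∧ s ≤ r ∧ nstar nn (s-1) < j ∧ j ≤ nstar nn s := by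
  induction r with
  | zero => rw [my_nstar_zero] at hjn; omega
  | succ r ih =>
    by_cases h : j ≤ nstar nn r
    · obtain ⟨s, h1, h2, h3, h4⟩ := ih h
      exact ⟨s, h1, Nat.le_succ_of_le h2, h3, h4⟩
    · exact ⟨r+1, by omega, le_refl _, by simpa using Nat.lt_of_not_le h, hjn⟩

lemma my_a_eq {n r : ℕ} {nn mm : ℕ → ℕ} {ζ : ℕ → ℤ} {a₁ a₂ : ℕ → ℕ} {ε₁ ε₂ : ℕ → ℤ}
    (hU₁ : UpsRel n a₁ ε₁ r nn mm ζ) (hU₂ : UpsRel n a₂ ε₂ r nn mm ζ)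
    {j : ℕ} (hj1 : 1 ≤ j) (hjn : j ≤ n) : a₁ j = a₂ j := by
  obtain ⟨-, h2, -, h4, -⟩ := hU₁
  obtain ⟨-, -, -, h4', -⟩ := hU₂
  obtain ⟨s, hs1, hs2, hs3, hs4⟩ := my_locate r nn hj1 (h2 ▸ hjn)
  rw [h4 s j hs1 hs2 hs3 hs4, h4' s j hs1 hs2 hs3 hs4]

lemma my_jump {n r : ℕ} {nn mm : ℕ → ℕ} {ζ : ℕ → ℤ} {a : ℕ → ℕ} {ε : ℕ → ℤ}
    (hU : UpsRel n a ε r nn mm ζ) {p : ℕ} (hp1 : 1 ≤ p) (hpn : p + 1 ≤ n)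
    (hlt : a p < a (p+1)) : ∃ t, 1 ≤ t ∧ t ≤ r ∧ p = nstar nn t := by
  obtain ⟨-, h2, -, h4, -⟩ := hU
  obtain ⟨s, hs1, hs2, hs3, hs4⟩ := my_locate r nn hp1 (by omega : p ≤ nstar nn r)
  rcases eq_or_lt_of_le hs4 with h | h
  · exact ⟨s, hs1, hs2, h⟩
  · have e1 : a p = mm s := h4 s p hs1 hs2 hs3 hs4
    have e2 : a (p+1) = mm s := h4 s (p+1) hs1 hs2 (by omega) h
    omega

lemma my_eps_case1 (n : ℕ) (hn : 3 ≤ n) (a : ℕ → ℕ) (ε : ℕ → ℤ) (h : IsNaiveEGK n a ε)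
    (hodd : Odd n) (heq : a (n-1) = a n)
    (heven : Even (∑ j ∈ Finset.Icc 1 (n - 1), a j)) : ε (n-2) = ε n := by
  have h5 := h.n5 n hn le_rfl hodd heven
  have hne : ε (n-1) ≠ 0 := (h.n2 (n-1) (by omega) (by omega)
    (Nat.Odd.sub_odd hodd odd_one)).mpr heven
  have hsq : ε (n-1) ^ 2 = 1 := by
    rcases h.mem (n-1) (by omega) (by omega) with h' | h' | h' <;> simp [h'] at hne ⊢
  have hpow : ε (n-1) ^ (a n + a (n-1)) = 1 := by
    have h2 : a n + a (n-1) = 2 * a n := by omega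
    rw [h2, pow_mul, hsq, one_pow]
  rw [h5, hpow, one_mul]

lemma my_eps_case2 (n : ℕ) (hn : 3 ≤ n) (a : ℕ → ℕ) (ε : ℕ → ℤ) (h : IsNaiveEGK n a ε)
    (heven : Even n) (heq : a (n-1) = a n)
    (hodd : Odd (∑ j ∈ Finset.Icc 1 n, a j)) : ε (n-2) = 0 := by
  obtain ⟨m, rfl⟩ : ∃ m, n = m + 3 := ⟨n - 3, by omega⟩
  have hsum : ∑ j ∈ Finset.Icc 1 (m+3), a j
      = ∑ j ∈ Finset.Icc 1 (m+1), a j + a (m+2) + a (m+3) := by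
    rw [Finset.sum_Icc_succ_top (by omega), Finset.sum_Icc_succ_top (by omega)]
  have h1 : ¬ Even (∑ j ∈ Finset.Icc 1 (m+1), a j) := by
    intro ⟨k, hk⟩
    obtain ⟨l, hl⟩ := hodd
    simp only [show m+3-1 = m+2 from rfl, show m+3-2 = m+1 from rfl] at heq
    omega
  have h2 := h.n2 (m+1) (by omega) (by omega) (by
    obtain ⟨k, hk⟩ := heven; exact ⟨k - 1, by omega⟩)
  show ε (m+1) = 0
  by_contra hne
  exact h1 (h2.mp hne)

lemma my_key (n : ℕ) (hn : 3 ≤ n)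
    (r : ℕ) (nn mm : ℕ → ℕ) (ζ : ℕ → ℤ)
    (a₁ a₂ : ℕ → ℕ) (ε₁ ε₂ : ℕ → ℤ)
    (hU₁ : UpsRel n a₁ ε₁ r nn mm ζ) (hU₂ : UpsRel n a₂ ε₂ r nn mm ζ)
    (heps : ε₁ (n-2) = ε₂ (n-2))
    (r' : ℕ) (nn' mm' : ℕ → ℕ) (ζ' : ℕ → ℤ)
    (hU : UpsRel (n-2) a₁ ε₁ r' nn' mm' ζ') : UpsRel (n-2) a₂ ε₂ r' nn' mm' ζ' := by
  obtain ⟨c1, c2, c3, c4, c5⟩ := hU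
  refine ⟨c1, c2, c3, ?_, ?_⟩
  · intro s j hs1 hs2 h3 h4
    rw [← my_a_eq hU₁ hU₂ (by omega) ?_]
    · exact c4 s j hs1 hs2 h3 h4
    · have : nstar nn' s ≤ nstar nn' r' := my_nstar_mono nn' hs2
      omega
  · intro s hs1 hs2
    rw [c5 s hs1 hs2]
    set p := nstar nn' s with hp
    have hps : nstar nn' (s-1) + nn' s = nstar nn' s := by
      have := my_nstar_succ nn' (s-1)
      rw [Nat.sub_add_cancel hs1] at this
      omega
    have hp1 : 1 ≤ p := by have := c1 s hs1 hs2; omega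
    rcases eq_or_lt_of_le hs2 with hsr | hsr
    · -- s = r', p = n - 2
      have : p = n - 2 := by rw [hp, hsr, c2]
      rw [this, heps]
    · -- s < r'
      have hs2' : s + 1 ≤ r' := hsr
      have hnn1 : 1 ≤ nn' (s+1) := c1 (s+1) (by omega) hs2'
      have hps1 : nstar nn' (s+1) = p + nn' (s+1) := my_nstar_succ nn' s
      have hple : nstar nn' (s+1) ≤ n - 2 := by
        have := my_nstar_mono nn' hs2'
        omega
      have hnns : 1 ≤ nn' s := c1 s hs1 hs2
      have ha1 : a₁ p = mm' s := c4 s p hs1 hs2 (by omega) le_rfl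
      have ha2 : a₁ (p+1) = mm' (s+1) :=
        c4 (s+1) (p+1) (by omega) hs2' (by simp [hp]) (by omega)
      have hmm : mm' s < mm' (s+1) := c3 s (s+1) hs1 (by omega) hs2'
      obtain ⟨t, ht1, ht2, ht3⟩ := my_jump hU₁ hp1 (by omega) (by omega)
      have e1 := hU₁.2.2.2.2 t ht1 ht2
      have e2 := hU₂.2.2.2.2 t ht1 ht2
      rw [ht3, ← e1, ← e2]

theorem statement_6 (n : ℕ) (hn : 3 ≤ n)
    (r : ℕ) (nn mm : ℕ → ℕ) (ζ : ℕ → ℤ) (hG : IsEGK n r nn mm ζ)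
    (a₁ a₂ : ℕ → ℕ) (ε₁ ε₂ : ℕ → ℤ)
    (h₁ : IsNaiveEGK n a₁ ε₁) (h₂ : IsNaiveEGK n a₂ ε₂)
    (hU₁ : UpsRel n a₁ ε₁ r nn mm ζ) (hU₂ : UpsRel n a₂ ε₂ r nn mm ζ)
    (hcase : (Odd n ∧ a₁ (n - 1) = a₁ n ∧
        Even (∑ j ∈ Finset.Icc 1 (n - 1), a₁ j)) ∨
      (Even n ∧ a₁ (n - 1) = a₁ n ∧ Odd (∑ j ∈ Finset.Icc 1 n, a₁ j))) :
    ∀ (r' : ℕ) (nn' mm' : ℕ → ℕ) (ζ' : ℕ → ℤ),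
      UpsRel (n - 2) a₁ ε₁ r' nn' mm' ζ' ↔ UpsRel (n - 2) a₂ ε₂ r' nn' mm' ζ' := by
  intro r' nn' mm' ζ'
  have hae : ∀ j, 1 ≤ j → j ≤ n → a₁ j = a₂ j := fun j hj1 hjn => my_a_eq hU₁ hU₂ hj1 hjn
  have hsum : ∀ k, k ≤ n → ∑ j ∈ Finset.Icc 1 k, a₁ j = ∑ j ∈ Finset.Icc 1 k, a₂ j := by
    intro k hk
    refine Finset.sum_congr rfl fun j hj => ?_
    rw [Finset.mem_Icc] at hj
    exact hae j hj.1 (le_trans hj.2 hk)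
  have heps : ε₁ (n-2) = ε₂ (n-2) := by
    rcases hcase with ⟨hodd, heq, heven⟩ | ⟨heven, heq, hodd⟩
    · have e1 := my_eps_case1 n hn a₁ ε₁ h₁ hodd heq heven
      have e2 := my_eps_case1 n hn a₂ ε₂ h₂ hodd
        (by rw [← hae (n-1) (by omega) (by omega), ← hae n (by omega) le_rfl]; exact heq)
        (by rw [← hsum (n-1) (by omega)]; exact heven)
      have z1 := hU₁.2.2.2.2 r hG.r_pos le_rfl
      have z2 := hU₂.2.2.2.2 r hG.r_pos le_rfl
      rw [hU₁.2.1] at z1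
      rw [hU₂.2.1] at z2
      rw [e1, e2, ← z1, ← z2]
    · have e1 := my_eps_case2 n hn a₁ ε₁ h₁ heven heq hodd
      have e2 := my_eps_case2 n hn a₂ ε₂ h₂ heven
        (by rw [← hae (n-1) (by omega) (by omega), ← hae n (by omega) le_rfl]; exact heq)
        (by rw [← hsum n le_rfl]; exact hodd)
      rw [e1, e2]
  constructor
  · exact my_key n hn r nn mm ζ a₁ a₂ ε₁ ε₂ hU₁ hU₂ heps r' nn' mm' ζ'
  · exact my_key n hn r nn mm ζ a₂ a₁ ε₂ ε₁ hU₂ hU₁ heps.symm r' nn' mm' ζ'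

end
end

section
/- Let B ∈ 𝓗_n(𝔬) be non-degenerate, and let 𝔩_B be the least integer such that ϖ^{𝔩_B} B^{−1} ∈ 𝓗_n(𝔬). Then there exists a positive integer λ, depending only on n and 𝔩_B, with the following property: every A ∈ 𝓗_n(𝔬) with all entries of A − B lying in ϖ^{λ}𝔬 is GL_n(𝔬)-equivalent to B. Moreover, if q is odd, then one may take λ = 𝔩_B + 1. -/
noncomputable section

open Matrix

/-- `c ∈ ϖ^k 𝔬` inside `F`, i.e. `ord(c) ≥ k`. -/
def MemPi {𝔬 F : Type} [CommRing 𝔬] [Field F] [Algebra 𝔬 F]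
    (ϖ : 𝔬) (k : ℕ) (c : F) : Prop :=
  ∃ d : 𝔬, c = algebraMap 𝔬 F (ϖ ^ k * d)

/-- `c ∈ ϖ^k 𝔬` inside `F`, for an integer exponent `k`. -/
def MemPiZ {𝔬 F : Type} [CommRing 𝔬] [Field F] [Algebra 𝔬 F]
    (ϖ : 𝔬) (k : ℤ) (c : F) : Prop :=
  ∃ d : 𝔬, c = (algebraMap 𝔬 F ϖ) ^ k * algebraMap 𝔬 F d

/-- `B ∈ 𝓗_ι(𝔬)`: a half-integral symmetric matrix over `𝔬`. -/
def IsHalfIntegral (𝔬 : Type) {F ι : Type} [CommRing 𝔬] [Field F] [Algebra 𝔬 F]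
    (B : Matrix ι ι F) : Prop :=
  B.IsSymm ∧ (∀ i, ∃ d : 𝔬, B i i = algebraMap 𝔬 F d) ∧
    (∀ i j, i ≠ j → ∃ d : 𝔬, 2 * B i j = algebraMap 𝔬 F d)

/-- `GL_ι(𝔬)`-equivalence of two matrices over `F`. -/
def GLEquiv (𝔬 : Type) {F ι : Type} [CommRing 𝔬] [Field F] [Algebra 𝔬 F]
    [Fintype ι] [DecidableEq ι] (B A : Matrix ι ι F) : Prop :=
  ∃ U : Matrix ι ι 𝔬, IsUnit U.det ∧
    A = (U.map (algebraMap 𝔬 F))ᵀ * B * U.map (algebraMap 𝔬 F)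

section Core
variable {O : Type} [CommRing O] [IsLocalRing O] {n : ℕ}


theorem isUnit_det_one_add
    (X : Matrix (Fin n) (Fin n) O)
    (hX : ∀ i j, X i j ∈ IsLocalRing.maximalIdeal O) :
    IsUnit (1 + X).det := by
  by_contra h
  have hdet : (1 + X).det ∈ IsLocalRing.maximalIdeal O := h
  have h1 : ((1 + X).map (IsLocalRing.residue O)).det = IsLocalRing.residue O (1 + X).det := by
    rw [← RingHom.mapMatrix_apply, ← RingHom.map_det]
  have h2 : (1 + X).map (IsLocalRing.residue O) = 1 := by
    ext i j
    have hz : IsLocalRing.residue O (X i j) = 0 :=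
      (IsLocalRing.residue_eq_zero_iff _).2 (hX i j)
    rw [Matrix.map_apply, Matrix.add_apply, map_add, hz, add_zero]
    by_cases hij : i = j
    · subst hij; rw [Matrix.one_apply_eq, Matrix.one_apply_eq, _root_.map_one]
    · rw [Matrix.one_apply_ne hij, Matrix.one_apply_ne hij, _root_.map_zero]
  rw [h2, Matrix.det_one] at h1
  have h3 : IsLocalRing.residue O (1 + X).det = 0 :=
    (IsLocalRing.residue_eq_zero_iff _).2 hdet
  rw [← h1] at h3
  exact one_ne_zero h3

theorem step_lemma (ϖ : O)
    (hϖm : ϖ ∈ IsLocalRing.maximalIdeal O)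
    (S T D : Matrix (Fin n) (Fin n) O) (c : O) (k m : ℕ)
    (hT : Tᵀ = T) (hD : Dᵀ = D)
    (hST : S * T = c • 1) (hTS : T * S = c • 1)
    (hdvd : ϖ ^ (k + 1) * (2 * c) ∣ ϖ ^ m) :
    ∃ U S' T' D' : Matrix (Fin n) (Fin n) O,
      (∃ H, U = 1 + ϖ ^ (k + 1) • H) ∧ IsUnit U.det ∧
      S' = Uᵀ * S * U ∧ T'ᵀ = T' ∧ D'ᵀ = D' ∧
      S' * T' = c • 1 ∧ T' * S' = c • 1 ∧
      S' + (2 * ϖ ^ (m + 1)) • D' = S + (2 * ϖ ^ m) • D := by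
  obtain ⟨w, hw⟩ := hdvd
  set a : O := ϖ ^ (k + 1) * (2 * w) with ha
  have hac : a * c = ϖ ^ m := by rw [hw]; ring
  set U : Matrix (Fin n) (Fin n) O := 1 + a • (T * D) with hU
  have hUform : ∃ H, U = 1 + ϖ ^ (k + 1) • H :=
    ⟨(2 * w) • (T * D), by rw [hU, smul_smul, ha]⟩
  have hUdet : IsUnit U.det := by
    apply isUnit_det_one_add
    intro i j
    rw [Matrix.smul_apply, ha]
    exact Ideal.mul_mem_right _ _ (Ideal.mul_mem_right _ _
      (Ideal.pow_mem_of_mem _ hϖm _ (Nat.succ_pos k)))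
  have hUT : Uᵀ = 1 + a • (D * T) := by
    rw [hU, Matrix.transpose_add, Matrix.transpose_one, Matrix.transpose_smul,
      Matrix.transpose_mul, hT, hD]
  set S' : Matrix (Fin n) (Fin n) O := Uᵀ * S * U with hS'
  have hSU : S * (a • (T * D)) = ϖ ^ m • D := by
    rw [Matrix.mul_smul, ← Matrix.mul_assoc, hST, Matrix.smul_mul, Matrix.one_mul,
      smul_smul, hac]
  have hUS : (a • (D * T)) * S = ϖ ^ m • D := by
    rw [Matrix.smul_mul, Matrix.mul_assoc, hTS, Matrix.mul_smul, Matrix.mul_one,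
      smul_smul, hac]
  set D' : Matrix (Fin n) (Fin n) O := (-(ϖ ^ k * w)) • (D * T * D) with hD'
  have e3 : (a • (D * T)) * S * (a • (T * D)) = (2 * ϖ ^ (m + 1)) • ((ϖ ^ k * w) • (D * T * D)) := by
    rw [hUS, Matrix.mul_smul, Matrix.smul_mul, smul_smul, ← Matrix.mul_assoc]
    have hscal : a * ϖ ^ m = 2 * ϖ ^ (m + 1) * (ϖ ^ k * w) := by rw [ha]; ring
    rw [hscal, ← smul_smul]
  have hexp : S' = S + (2 * ϖ ^ m) • D + (2 * ϖ ^ (m + 1)) • ((ϖ ^ k * w) • (D * T * D)) := by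
    rw [hS', hUT, hU]
    simp only [Matrix.add_mul, Matrix.mul_add, Matrix.one_mul, Matrix.mul_one]
    rw [e3, hSU, hUS]
    have h2m : (2 * ϖ ^ m) • D = ϖ ^ m • D + ϖ ^ m • D := by rw [two_mul, add_smul]
    rw [h2m]
    abel
  have invU : Invertible U := U.invertibleOfIsUnitDet hUdet
  set T' : Matrix (Fin n) (Fin n) O := U⁻¹ * T * (U⁻¹)ᵀ with hT'
  have hUinv : U * U⁻¹ = 1 := Matrix.mul_nonsing_inv U hUdet
  have hinvU : U⁻¹ * U = 1 := Matrix.nonsing_inv_mul U hUdet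
  have hUTinv : Uᵀ * (U⁻¹)ᵀ = 1 := by
    rw [Matrix.transpose_nonsing_inv, Matrix.mul_nonsing_inv _ (by rwa [Matrix.det_transpose])]
  have hTinvU : (U⁻¹)ᵀ * Uᵀ = 1 := by
    rw [Matrix.transpose_nonsing_inv, Matrix.nonsing_inv_mul _ (by rwa [Matrix.det_transpose])]
  refine ⟨U, S', T', D', hUform, hUdet, rfl, ?_, ?_, ?_, ?_, ?_⟩
  · rw [hT', Matrix.transpose_mul, Matrix.transpose_mul, Matrix.transpose_transpose, hT,
      Matrix.mul_assoc]
  · rw [hD', Matrix.transpose_smul, Matrix.transpose_mul, Matrix.transpose_mul,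
      hD, hT, ← Matrix.mul_assoc]
  · rw [hS', hT']
    calc Uᵀ * S * U * (U⁻¹ * T * (U⁻¹)ᵀ)
        = Uᵀ * S * (U * U⁻¹) * T * (U⁻¹)ᵀ := by simp only [Matrix.mul_assoc]
      _ = Uᵀ * (S * T) * (U⁻¹)ᵀ := by rw [hUinv]; simp only [Matrix.mul_assoc, Matrix.mul_one]
      _ = c • (Uᵀ * (U⁻¹)ᵀ) := by rw [hST, Matrix.mul_smul, Matrix.mul_one, Matrix.smul_mul]
      _ = c • 1 := by rw [hUTinv]
  · rw [hS', hT']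
    calc U⁻¹ * T * (U⁻¹)ᵀ * (Uᵀ * S * U)
        = U⁻¹ * T * ((U⁻¹)ᵀ * Uᵀ) * S * U := by simp only [Matrix.mul_assoc]
      _ = U⁻¹ * (T * S) * U := by rw [hTinvU]; simp only [Matrix.mul_assoc, Matrix.mul_one]
      _ = c • (U⁻¹ * U) := by rw [hTS, Matrix.mul_smul, Matrix.mul_one, Matrix.smul_mul]
      _ = c • 1 := by rw [hinvU]
  · rw [hexp, hD', neg_smul, smul_neg]
    abel

variable [IsAdicComplete (IsLocalRing.maximalIdeal O) O]

theorem core_lemma (ϖ : O) (hspan : IsLocalRing.maximalIdeal O = Ideal.span {ϖ})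
    (S T D : Matrix (Fin n) (Fin n) O) (c : O) (m : ℕ)
    (hT : Tᵀ = T) (hD : Dᵀ = D)
    (hST : S * T = c • 1) (hTS : T * S = c • 1)
    (hdvd : ϖ * (2 * c) ∣ ϖ ^ m) :
    ∃ V : Matrix (Fin n) (Fin n) O, IsUnit V.det ∧
      Vᵀ * S * V = S + (2 * ϖ ^ m) • D := by
  have hϖm : ϖ ∈ IsLocalRing.maximalIdeal O := by
    rw [hspan]; exact Ideal.subset_span rfl
  set Φ : ℕ → (Matrix (Fin n) (Fin n) O × Matrix (Fin n) (Fin n) O × Matrix (Fin n) (Fin n) O) → Prop := fun k s =>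
    IsUnit s.1.det ∧ s.2.1ᵀ = s.2.1 ∧ s.2.2ᵀ = s.2.2 ∧
    (s.1ᵀ * S * s.1) * s.2.1 = c • 1 ∧ s.2.1 * (s.1ᵀ * S * s.1) = c • 1 ∧
    s.1ᵀ * S * s.1 + (2 * ϖ ^ (m + k)) • s.2.2 = S + (2 * ϖ ^ m) • D with hΦdef
  have hstep : ∀ k s, Φ k s →
      ∃ s', (∃ H, s'.1 = s.1 * (1 + ϖ ^ (k + 1) • H)) ∧ Φ (k + 1) s' := by
    rintro k ⟨V, Tk, Dk⟩ ⟨h1, h2, h3, h4, h5, h6⟩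
    dsimp only at h1 h2 h3 h4 h5 h6
    have hdvd' : ϖ ^ (k + 1) * (2 * c) ∣ ϖ ^ (m + k) := by
      have h' := mul_dvd_mul_left (ϖ ^ k) hdvd
      rwa [show ϖ ^ k * (ϖ * (2 * c)) = ϖ ^ (k + 1) * (2 * c) by rw [pow_succ]; ring,
        show ϖ ^ k * ϖ ^ m = ϖ ^ (m + k) by rw [← pow_add, Nat.add_comm]] at h'
    obtain ⟨U, S', T', D', hUform, hUdet, hS'eq, hT's, hD's, hS'T', hT'S', htar⟩ :=
      step_lemma ϖ hϖm (Vᵀ * S * V) Tk Dk c k (m + k) h2 h3 h4 h5 hdvd'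
    have hVU : (V * U)ᵀ * S * (V * U) = S' := by
      rw [hS'eq, Matrix.transpose_mul]
      simp only [mul_assoc]
    refine ⟨(V * U, T', D'), ?_, ?_, hT's, hD's, ?_, ?_, ?_⟩
    · obtain ⟨H, hH⟩ := hUform
      exact ⟨H, by rw [hH]⟩
    · show IsUnit (V * U).det
      rw [Matrix.det_mul]
      exact h1.mul hUdet
    · show (V * U)ᵀ * S * (V * U) * T' = c • 1
      rw [hVU]; exact hS'T'
    · show T' * ((V * U)ᵀ * S * (V * U)) = c • 1
      rw [hVU]; exact hT'S'
    · show (V * U)ᵀ * S * (V * U) + (2 * ϖ ^ (m + (k + 1))) • D' = S + (2 * ϖ ^ m) • D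
      rw [hVU, show m + (k + 1) = (m + k) + 1 by omega, htar]
      exact h6
  have hstep' : ∀ k s, ∃ s', Φ k s →
      (∃ H, s'.1 = s.1 * (1 + ϖ ^ (k + 1) • H)) ∧ Φ (k + 1) s' := by
    intro k s
    by_cases h : Φ k s
    · obtain ⟨s', hs'⟩ := hstep k s h
      exact ⟨s', fun _ => hs'⟩
    · exact ⟨s, fun h' => absurd h' h⟩
  set g : ℕ → (Matrix (Fin n) (Fin n) O × Matrix (Fin n) (Fin n) O × Matrix (Fin n) (Fin n) O) → (Matrix (Fin n) (Fin n) O × Matrix (Fin n) (Fin n) O × Matrix (Fin n) (Fin n) O) := fun k s => (hstep' k s).choose with hgdef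
  have hg : ∀ k s, Φ k s →
      (∃ H, (g k s).1 = s.1 * (1 + ϖ ^ (k + 1) • H)) ∧ Φ (k + 1) (g k s) :=
    fun k s h => (hstep' k s).choose_spec h
  set f : ℕ → (Matrix (Fin n) (Fin n) O × Matrix (Fin n) (Fin n) O × Matrix (Fin n) (Fin n) O) := fun k => Nat.rec (1, T, D) g k with hfdef
  have hfs : ∀ k, f (k + 1) = g k (f k) := fun k => rfl
  have hΦ : ∀ k, Φ k (f k) := by
    intro k
    induction k with
    | zero =>
      refine ⟨?_, hT, hD, ?_, ?_, ?_⟩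
      · show IsUnit (1 : Matrix (Fin n) (Fin n) O).det
        simp
      · show 1ᵀ * S * 1 * T = c • 1
        simpa using hST
      · show T * (1ᵀ * S * 1) = c • 1
        simpa using hTS
      · show 1ᵀ * S * 1 + (2 * ϖ ^ (m + 0)) • D = S + (2 * ϖ ^ m) • D
        simp
    | succ k ih => rw [hfs]; exact (hg k (f k) ih).2
  have hstepf : ∀ k, ∃ H, (f (k + 1)).1 = (f k).1 * (1 + ϖ ^ (k + 1) • H) :=
    fun k => by rw [hfs]; exact (hg k (f k) (hΦ k)).1
  set V : ℕ → Matrix (Fin n) (Fin n) O := fun k => (f k).1 with hVdef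
  -- step divisibility
  have hdvdstep : ∀ k i j, ϖ ^ (k + 1) ∣ (V (k + 1) i j - V k i j) := by
    intro k i j
    obtain ⟨H, hH⟩ := hstepf k
    have : V (k + 1) = V k + ϖ ^ (k + 1) • (V k * H) := by
      show (f (k+1)).1 = _
      rw [hH, Matrix.mul_add, Matrix.mul_one, Matrix.mul_smul]
    rw [this]
    simp only [Matrix.add_apply, Matrix.smul_apply, smul_eq_mul]
    rw [add_sub_cancel_left]
    exact Dvd.intro _ rfl
  have hdvd2 : ∀ a b, a ≤ b → ∀ i j, ϖ ^ a ∣ (V b i j - V a i j) := by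
    intro a b hab
    induction b, hab using Nat.le_induction with
    | base => intro i j; simp
    | succ b hab ih =>
      intro i j
      have h1 := ih i j
      have h2 : ϖ ^ a ∣ (V (b + 1) i j - V b i j) :=
        dvd_trans (pow_dvd_pow ϖ (by omega)) (hdvdstep b i j)
      have := dvd_add h2 h1
      rwa [sub_add_sub_cancel] at this
  have hsmultop : ∀ a : ℕ,
      ((IsLocalRing.maximalIdeal O) ^ a • ⊤ : Submodule O O) = Ideal.span {ϖ ^ a} := by
    intro a
    rw [smul_eq_mul, Ideal.mul_top, hspan, Ideal.span_singleton_pow]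
  -- limit
  have hlimex : ∀ i j, ∃ L : O, ∀ k, ϖ ^ k ∣ (L - V k i j) := by
    intro i j
    have hpre : IsPrecomplete (IsLocalRing.maximalIdeal O) O := inferInstance
    obtain ⟨L, hL⟩ := hpre.prec (f := fun k => V k i j) (by
      intro a b hab
      rw [SModEq.sub_mem, hsmultop, Ideal.mem_span_singleton,
        show V a i j - V b i j = -(V b i j - V a i j) by ring]
      exact dvd_neg.mpr (hdvd2 a b hab i j))
    refine ⟨L, fun k => ?_⟩
    have := hL k
    rw [SModEq.sub_mem, hsmultop, Ideal.mem_span_singleton] at this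
    rw [show L - V k i j = -(V k i j - L) by ring]
    exact dvd_neg.mpr this
  set W : Matrix (Fin n) (Fin n) O := Matrix.of (fun i j => (hlimex i j).choose) with hWdef
  have hlim : ∀ k i j, ϖ ^ k ∣ (W i j - V k i j) := fun k i j => (hlimex i j).choose_spec k
  have hWunit : IsUnit W.det := by
    have hW1 : ∀ i j, ((W - 1) : Matrix (Fin n) (Fin n) O) i j ∈ IsLocalRing.maximalIdeal O := by
      intro i j
      obtain ⟨H, hH⟩ := hstepf 0
      simp only [zero_add] at hH
      have hV1 : V 1 = 1 + ϖ ^ 1 • H := by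
        rw [show V 1 = (f 1).1 from rfl, hH, show (f 0).1 = 1 from rfl, Matrix.one_mul]
      have h1 : ϖ ∣ (W i j - V 1 i j) := by
        have := hlim 1 i j; rwa [pow_one] at this
      have h2 : ϖ ∣ (V 1 i j - (1 : Matrix (Fin n) (Fin n) O) i j) := by
        rw [hV1]
        simp only [Matrix.add_apply, Matrix.smul_apply, smul_eq_mul, pow_one]
        rw [add_comm, add_sub_cancel_right]
        exact Dvd.intro _ rfl
      have h3 : ϖ ∣ ((W - 1) : Matrix (Fin n) (Fin n) O) i j := by
        rw [Matrix.sub_apply]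
        have := dvd_add h1 h2
        rwa [sub_add_sub_cancel] at this
      rw [hspan, Ideal.mem_span_singleton]
      exact h3
    have : IsUnit (1 + (W - 1) : Matrix (Fin n) (Fin n) O).det := isUnit_det_one_add _ hW1
    rwa [add_sub_cancel] at this
  refine ⟨W, hWunit, ?_⟩
  have hhaus : IsHausdorff (IsLocalRing.maximalIdeal O) O := inferInstance
  have hEzero : Wᵀ * S * W - (S + (2 * ϖ ^ m) • D) = 0 := by
    ext i j
    rw [Matrix.zero_apply]
    apply hhaus.haus
    intro k
    rw [SModEq.zero, hsmultop, Ideal.mem_span_singleton]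
    have h6k := (hΦ k).2.2.2.2.2
    have hdecomp : Wᵀ * S * W - (S + (2 * ϖ ^ m) • D)
        = (W - V k)ᵀ * S * W + (V k)ᵀ * S * (W - V k) - (2 * ϖ ^ (m + k)) • (f k).2.2 := by
      rw [← h6k]
      simp only [Matrix.transpose_sub, Matrix.sub_mul, Matrix.mul_sub]
      abel
    rw [hdecomp]
    simp only [Matrix.sub_apply, Matrix.add_apply, Matrix.smul_apply, smul_eq_mul]
    refine dvd_sub (dvd_add ?_ ?_) ?_
    · rw [Matrix.mul_apply]
      refine Finset.dvd_sum fun q _ => ?_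
      rw [Matrix.mul_apply]
      rw [Finset.sum_mul]
      refine Finset.dvd_sum fun p _ => ?_
      have : ϖ ^ k ∣ (W - V k)ᵀ i p := by
        rw [Matrix.transpose_apply, Matrix.sub_apply]; exact hlim k p i
      exact dvd_mul_of_dvd_left (dvd_mul_of_dvd_left this _) _
    · rw [Matrix.mul_apply]
      refine Finset.dvd_sum fun q _ => ?_
      have : ϖ ^ k ∣ (W - V k) q j := by
        rw [Matrix.sub_apply]; exact hlim k q j
      exact this.mul_left _
    · have : ϖ ^ k ∣ 2 * ϖ ^ (m + k) :=
        dvd_mul_of_dvd_right (pow_dvd_pow ϖ (by omega)) 2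
      exact this.mul_right _
  have := sub_eq_zero.mp hEzero
  exact this

end Core


section Glue
variable {𝔬 F : Type} [CommRing 𝔬] [IsDomain 𝔬] [IsDiscreteValuationRing 𝔬]
  [Field F] [Algebra 𝔬 F] [IsFractionRing 𝔬 F]

theorem zpow_eq_unit_aux (ϖ : 𝔬) (hϖ : Irreducible ϖ) (z : ℤ) (v : 𝔬ˣ)
    (h : (algebraMap 𝔬 F ϖ) ^ z = algebraMap 𝔬 F (v : 𝔬)) : z = 0 := by
  have inj : Function.Injective (algebraMap 𝔬 F) := IsFractionRing.injective 𝔬 F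
  have hϖ0 : ϖ ≠ 0 := hϖ.ne_zero
  rcases lt_trichotomy z 0 with hz | hz | hz
  · exfalso
    have h1 : (algebraMap 𝔬 F ϖ) ^ (-z) = algebraMap 𝔬 F ((v⁻¹ : 𝔬ˣ) : 𝔬) := by
      rw [_root_.zpow_neg, h]
      exact inv_eq_of_mul_eq_one_right (by rw [← _root_.map_mul, Units.mul_inv, _root_.map_one])
    have htz : ((-z).toNat : ℤ) = -z := Int.toNat_of_nonneg (by omega)
    have h2 : (algebraMap 𝔬 F ϖ) ^ (-z) = algebraMap 𝔬 F (ϖ ^ (-z).toNat) := by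
      rw [_root_.map_pow, ← zpow_natCast, htz]
    have h3 : ϖ ^ (-z).toNat = ((v⁻¹ : 𝔬ˣ) : 𝔬) := inj (by rw [← h2, h1])
    have hu : IsUnit (ϖ ^ (-z).toNat) := h3 ▸ (v⁻¹ : 𝔬ˣ).isUnit
    have ht1 : (-z).toNat ≠ 0 := by omega
    exact hϖ.not_isUnit (isUnit_of_dvd_unit (dvd_pow_self ϖ ht1) hu)
  · exact hz
  · exfalso
    have htz : (z.toNat : ℤ) = z := Int.toNat_of_nonneg (by omega)
    have h2 : (algebraMap 𝔬 F ϖ) ^ z = algebraMap 𝔬 F (ϖ ^ z.toNat) := by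
      rw [_root_.map_pow, ← zpow_natCast, htz]
    have h3 : ϖ ^ z.toNat = (v : 𝔬) := inj (by rw [← h2, h])
    have hu : IsUnit (ϖ ^ z.toNat) := h3 ▸ v.isUnit
    have ht1 : z.toNat ≠ 0 := by omega
    exact hϖ.not_isUnit (isUnit_of_dvd_unit (dvd_pow_self ϖ ht1) hu)

theorem fact_c [CharZero F] (ϖ : 𝔬) (hϖ : Irreducible ϖ) (l : ℤ) (u : 𝔬ˣ) (e : ℕ)
    (h2 : (2 : 𝔬) = u * ϖ ^ e) (c : 𝔬)
    (hc : algebraMap 𝔬 F c = 4 * (algebraMap 𝔬 F ϖ) ^ l) :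
    ∃ (v : 𝔬ˣ) (t : ℕ), (t : ℤ) = 2 * e + l ∧ c = v * ϖ ^ t := by
  have inj : Function.Injective (algebraMap 𝔬 F) := IsFractionRing.injective 𝔬 F
  have hϖ0 : ϖ ≠ 0 := hϖ.ne_zero
  have hϖF : algebraMap 𝔬 F ϖ ≠ 0 := fun h0 => hϖ0 (inj (by rw [h0, _root_.map_zero]))
  have h40 : (4 : F) ≠ 0 := by norm_num
  have hc0 : c ≠ 0 := by
    intro h0
    rw [h0, _root_.map_zero] at hc
    exact (mul_ne_zero h40 (zpow_ne_zero _ hϖF)) hc.symm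
  obtain ⟨t, v, hcv⟩ := IsDiscreteValuationRing.eq_unit_mul_pow_irreducible hc0 hϖ
  refine ⟨v, t, ?_, hcv⟩
  have h4 : (4 : F) = (algebraMap 𝔬 F (u : 𝔬)) ^ 2 * (algebraMap 𝔬 F ϖ) ^ ((2 * e : ℕ) : ℤ) := by
    have h44 : (4 : F) = (algebraMap 𝔬 F 2) * (algebraMap 𝔬 F 2) := by
      rw [map_ofNat]; norm_num
    rw [h44, h2, _root_.map_mul, _root_.map_pow, zpow_natCast]
    ring
  have hE : algebraMap 𝔬 F (v : 𝔬) * (algebraMap 𝔬 F ϖ) ^ ((t : ℕ) : ℤ)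
      = (algebraMap 𝔬 F (u : 𝔬)) ^ 2 * (algebraMap 𝔬 F ϖ) ^ ((2 * e : ℕ) + l : ℤ) := by
    rw [zpow_natCast, ← _root_.map_pow, ← _root_.map_mul, ← hcv, hc, h4, zpow_add₀ hϖF]
    ring
  have key : (algebraMap 𝔬 F ϖ) ^ ((t : ℤ) - ((2 * e : ℕ) + l)) =
      algebraMap 𝔬 F ((u ^ 2 * v⁻¹ : 𝔬ˣ) : 𝔬) := by
    rw [zpow_sub₀ hϖF, div_eq_iff (zpow_ne_zero _ hϖF)]
    calc (algebraMap 𝔬 F ϖ) ^ ((t : ℕ) : ℤ)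
        = algebraMap 𝔬 F ((v⁻¹ : 𝔬ˣ) : 𝔬) *
            (algebraMap 𝔬 F (v : 𝔬) * (algebraMap 𝔬 F ϖ) ^ ((t : ℕ) : ℤ)) := by
          rw [← mul_assoc, ← _root_.map_mul, Units.inv_mul, _root_.map_one, one_mul]
      _ = algebraMap 𝔬 F ((v⁻¹ : 𝔬ˣ) : 𝔬) *
            ((algebraMap 𝔬 F (u : 𝔬)) ^ 2 * (algebraMap 𝔬 F ϖ) ^ ((2 * e : ℕ) + l : ℤ)) := by
          rw [hE]
      _ = algebraMap 𝔬 F ((u ^ 2 * v⁻¹ : 𝔬ˣ) : 𝔬) * (algebraMap 𝔬 F ϖ) ^ ((2 * e : ℕ) + l : ℤ) := by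
          rw [Units.val_mul, Units.val_pow_eq_pow_val, _root_.map_mul, _root_.map_pow]
          ring
  have := zpow_eq_unit_aux ϖ hϖ _ _ key
  push_cast at this ⊢
  omega

end Glue

theorem half_two {𝔬 F ι : Type} [CommRing 𝔬] [Field F] [Algebra 𝔬 F]
    (X : Matrix ι ι F) (hX : IsHalfIntegral 𝔬 X) (i j : ι) :
    ∃ d : 𝔬, (2 : F) * X i j = algebraMap 𝔬 F d := by
  by_cases hij : i = j
  · subst hij
    obtain ⟨d, hd⟩ := hX.2.1 i
    exact ⟨2 * d, by rw [hd, _root_.map_mul, map_ofNat]⟩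
  · exact hX.2.2 i j hij

theorem master (𝔬 : Type) [CommRing 𝔬] [IsDomain 𝔬] [IsDiscreteValuationRing 𝔬]
    [IsAdicComplete (IsLocalRing.maximalIdeal 𝔬) 𝔬]
    (F : Type) [Field F] [Algebra 𝔬 F] [IsFractionRing 𝔬 F] [CharZero F]
    (ϖ : 𝔬) (hϖ : Irreducible ϖ) (n : ℕ) (l : ℤ) (μ : ℤ)
    (B : Matrix (Fin n) (Fin n) F) (hB : IsHalfIntegral 𝔬 B) (hBdet : B.det ≠ 0)
    (hBinv : IsHalfIntegral 𝔬 ((algebraMap 𝔬 F ϖ ^ l) • B⁻¹))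
    (A : Matrix (Fin n) (Fin n) F) (hA : IsHalfIntegral 𝔬 A)
    (hdiff : ∀ i j, MemPiZ ϖ μ ((A - B) i j))
    (hμ : ∀ c : 𝔬, algebraMap 𝔬 F c = 4 * (algebraMap 𝔬 F ϖ) ^ l →
        0 ≤ μ ∧ ϖ * (2 * c) ∣ ϖ ^ μ.toNat) :
    GLEquiv 𝔬 B A := by
  rcases Nat.eq_zero_or_pos n with h0 | hpos
  · subst h0
    refine ⟨1, by simp, ?_⟩
    ext i j
    exact i.elim0
  have inj : Function.Injective (algebraMap 𝔬 F) := IsFractionRing.injective 𝔬 F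
  have hϖ0 : ϖ ≠ 0 := hϖ.ne_zero
  have hϖF : algebraMap 𝔬 F ϖ ≠ 0 := fun h0 => hϖ0 (inj (by rw [h0, _root_.map_zero]))
  have hBu : IsUnit B.det := isUnit_iff_ne_zero.mpr hBdet
  have hBBinv : B * B⁻¹ = 1 := Matrix.mul_nonsing_inv B hBu
  have hBinvB : B⁻¹ * B = 1 := Matrix.nonsing_inv_mul B hBu
  set ϖF : F := algebraMap 𝔬 F ϖ with hϖFdef
  -- the integral matrices S and T
  set S : Matrix (Fin n) (Fin n) 𝔬 := Matrix.of (fun i j => (half_two B hB i j).choose) with hSdef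
  have hS : ∀ i j, algebraMap 𝔬 F (S i j) = 2 * B i j :=
    fun i j => ((half_two B hB i j).choose_spec).symm
  set T : Matrix (Fin n) (Fin n) 𝔬 :=
    Matrix.of (fun i j => (half_two _ hBinv i j).choose) with hTdef
  have hT : ∀ i j, algebraMap 𝔬 F (T i j) = 2 * ((ϖF ^ l • B⁻¹) i j) :=
    fun i j => ((half_two _ hBinv i j).choose_spec).symm
  -- symmetry facts
  have hBsymm : ∀ i j, B j i = B i j := fun i j => hB.1.apply i j
  have hAsymm : ∀ i j, A j i = A i j := fun i j => hA.1.apply i j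
  have hBinvsymm : ∀ i j, B⁻¹ j i = B⁻¹ i j := by
    intro i j
    have h : (B⁻¹).IsSymm := by
      show (B⁻¹)ᵀ = B⁻¹
      rw [Matrix.transpose_nonsing_inv, hB.1.eq]
    exact h.apply i j
  have hSsym : Sᵀ = S := by
    ext i j
    apply inj
    rw [Matrix.transpose_apply, hS, hS, hBsymm]
  have hTsym : Tᵀ = T := by
    ext i j
    apply inj
    rw [Matrix.transpose_apply, hT, hT, Matrix.smul_apply, Matrix.smul_apply,
      smul_eq_mul, smul_eq_mul, hBinvsymm]
  -- the scalar c
  set i₀ : Fin n := ⟨0, hpos⟩ with hi₀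
  have hSTmap : ∀ i j, algebraMap 𝔬 F ((S * T) i j)
      = (4 * ϖF ^ l) * (1 : Matrix (Fin n) (Fin n) F) i j := by
    intro i j
    rw [Matrix.mul_apply, _root_.map_sum]
    have : ∀ k ∈ Finset.univ, algebraMap 𝔬 F (S i k * T k j)
        = (4 * ϖF ^ l) * (B i k * B⁻¹ k j) := by
      intro k _
      rw [_root_.map_mul, hS, hT, Matrix.smul_apply, smul_eq_mul]
      ring
    rw [Finset.sum_congr rfl this, ← Finset.mul_sum, ← Matrix.mul_apply, hBBinv]
  have hTSmap : ∀ i j, algebraMap 𝔬 F ((T * S) i j)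
      = (4 * ϖF ^ l) * (1 : Matrix (Fin n) (Fin n) F) i j := by
    intro i j
    rw [Matrix.mul_apply, _root_.map_sum]
    have : ∀ k ∈ Finset.univ, algebraMap 𝔬 F (T i k * S k j)
        = (4 * ϖF ^ l) * (B⁻¹ i k * B k j) := by
      intro k _
      rw [_root_.map_mul, hT, hS, Matrix.smul_apply, smul_eq_mul]
      ring
    rw [Finset.sum_congr rfl this, ← Finset.mul_sum, ← Matrix.mul_apply, hBinvB]
  set c : 𝔬 := (S * T) i₀ i₀ with hcdef
  have hc : algebraMap 𝔬 F c = 4 * ϖF ^ l := by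
    rw [hcdef, hSTmap, Matrix.one_apply_eq, mul_one]
  have hST : S * T = c • 1 := by
    ext i j
    apply inj
    rw [hSTmap, Matrix.smul_apply, smul_eq_mul, _root_.map_mul, hc]
    by_cases hij : i = j
    · subst hij; rw [Matrix.one_apply_eq, Matrix.one_apply_eq, _root_.map_one]
    · rw [Matrix.one_apply_ne hij, Matrix.one_apply_ne hij, _root_.map_zero]
  have hTS : T * S = c • 1 := by
    ext i j
    apply inj
    rw [hTSmap, Matrix.smul_apply, smul_eq_mul, _root_.map_mul, hc]
    by_cases hij : i = j
    · subst hij; rw [Matrix.one_apply_eq, Matrix.one_apply_eq, _root_.map_one]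
    · rw [Matrix.one_apply_ne hij, Matrix.one_apply_ne hij, _root_.map_zero]
  obtain ⟨hμ0, hdvd⟩ := hμ c hc
  set μ₀ : ℕ := μ.toNat with hμ₀def
  have hμcast : (μ₀ : ℤ) = μ := Int.toNat_of_nonneg hμ0
  -- the difference matrix
  have hDex : ∃ D : Matrix (Fin n) (Fin n) 𝔬, ∀ i j,
      (A - B) i j = algebraMap 𝔬 F (ϖ ^ μ₀) * algebraMap 𝔬 F (D i j) := by
    refine ⟨Matrix.of (fun i j => (hdiff i j).choose), fun i j => ?_⟩
    have h := (hdiff i j).choose_spec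
    rw [h]
    congr 1
    rw [← hμcast, zpow_natCast, _root_.map_pow]
  obtain ⟨D, hD⟩ := hDex
  have hDsym : Dᵀ = D := by
    ext i j
    apply inj
    have h1 : (A - B) i j = (A - B) j i := by
      rw [Matrix.sub_apply, Matrix.sub_apply, hAsymm, hBsymm]
    have h2 := hD i j
    rw [h1, hD j i] at h2
    have h3 := mul_left_cancel₀ (a := algebraMap 𝔬 F (ϖ ^ μ₀))
      (by rw [_root_.map_pow]; exact pow_ne_zero _ hϖF) h2.symm
    rw [Matrix.transpose_apply, h3]
  -- run the Newton iteration over 𝔬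
  obtain ⟨V, hVu, hVeq⟩ := core_lemma ϖ hϖ.maximalIdeal_eq S T D c μ₀ hTsym hDsym hST hTS hdvd
  refine ⟨V, hVu, ?_⟩
  -- push the equation to F
  have hmap := congrArg (fun X : Matrix (Fin n) (Fin n) 𝔬 => X.map (algebraMap 𝔬 F)) hVeq
  simp only [Matrix.map_mul] at hmap
  rw [Matrix.map_add (algebraMap 𝔬 F) (fun a b => _root_.map_add _ a b)] at hmap
  rw [Matrix.transpose_map] at hmap
  -- identify images
  have hSm : S.map (algebraMap 𝔬 F) = (2 : F) • B := by
    ext i j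
    rw [Matrix.map_apply, hS, Matrix.smul_apply, smul_eq_mul]
  have hDm : ((2 * ϖ ^ μ₀) • D).map (algebraMap 𝔬 F) = (2 : F) • (A - B) := by
    ext i j
    rw [Matrix.map_apply, Matrix.smul_apply, smul_eq_mul, _root_.map_mul, _root_.map_mul,
      map_ofNat, Matrix.smul_apply, smul_eq_mul, hD i j]
    ring
  rw [hSm, hDm] at hmap
  have hflip : (V.map (algebraMap 𝔬 F))ᵀ * ((2:F) • B) * V.map (algebraMap 𝔬 F)
      = (2:F) • ((V.map (algebraMap 𝔬 F))ᵀ * B * V.map (algebraMap 𝔬 F)) := by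
    rw [Matrix.mul_smul, Matrix.smul_mul]
  rw [hflip] at hmap
  have hrhs : (2:F) • B + (2:F) • (A - B) = (2:F) • A := by
    rw [← smul_add]
    congr 1
    abel
  rw [hrhs] at hmap
  have := smul_right_injective (Matrix (Fin n) (Fin n) F) (two_ne_zero (α := F)) hmap
  exact this.symm


theorem statement_11
    (𝔬 : Type) [CommRing 𝔬] [IsDomain 𝔬] [IsDiscreteValuationRing 𝔬]
    [IsAdicComplete (IsLocalRing.maximalIdeal 𝔬) 𝔬]
    [Finite (IsLocalRing.ResidueField 𝔬)]
    (F : Type) [Field F] [Algebra 𝔬 F] [IsFractionRing 𝔬 F] [CharZero F]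
    (ϖ : 𝔬) (hϖ : Irreducible ϖ)
    (n : ℕ) (l : ℤ) :
    (∃ lam : ℕ, 0 < lam ∧
      ∀ B : Matrix (Fin n) (Fin n) F, IsHalfIntegral 𝔬 B → B.det ≠ 0 →
        IsHalfIntegral 𝔬 ((algebraMap 𝔬 F ϖ ^ l) • B⁻¹) →
        (∀ l' : ℤ, l' < l → ¬ IsHalfIntegral 𝔬 ((algebraMap 𝔬 F ϖ ^ l') • B⁻¹)) →
        ∀ A : Matrix (Fin n) (Fin n) F, IsHalfIntegral 𝔬 A →
          (∀ i j, MemPiZ ϖ (lam : ℤ) ((A - B) i j)) → GLEquiv 𝔬 B A) ∧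
    (Odd (Nat.card (IsLocalRing.ResidueField 𝔬)) →
      ∀ B : Matrix (Fin n) (Fin n) F, IsHalfIntegral 𝔬 B → B.det ≠ 0 →
        IsHalfIntegral 𝔬 ((algebraMap 𝔬 F ϖ ^ l) • B⁻¹) →
        (∀ l' : ℤ, l' < l → ¬ IsHalfIntegral 𝔬 ((algebraMap 𝔬 F ϖ ^ l') • B⁻¹)) →
        ∀ A : Matrix (Fin n) (Fin n) F, IsHalfIntegral 𝔬 A →
          (∀ i j, MemPiZ ϖ (l + 1) ((A - B) i j)) → GLEquiv 𝔬 B A) := by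
  have h20 : (2 : 𝔬) ≠ 0 := by
    intro h
    have : (2 : F) = 0 := by rw [← map_ofNat (algebraMap 𝔬 F) 2, h, _root_.map_zero]
    exact two_ne_zero this
  obtain ⟨e, u, h2⟩ := IsDiscreteValuationRing.eq_unit_mul_pow_irreducible h20 hϖ
  constructor
  · refine ⟨(l + 3 * (e : ℤ) + 1).toNat ⊔ 1, lt_of_lt_of_le Nat.one_pos (le_max_right _ _), ?_⟩
    intro B hB hBdet hBinv _hmin A hA hdiff
    set lam : ℕ := (l + 3 * (e : ℤ) + 1).toNat ⊔ 1 with hlamdef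
    apply master 𝔬 F ϖ hϖ n l ((lam : ℕ) : ℤ) B hB hBdet hBinv A hA hdiff
    intro c hc
    obtain ⟨v, t, ht, hcv⟩ := fact_c ϖ hϖ l u e h2 c hc
    refine ⟨Int.natCast_nonneg _, ?_⟩
    rw [Int.toNat_natCast]
    have hfac : ϖ * (2 * c) = ((u * v : 𝔬ˣ) : 𝔬) * ϖ ^ (1 + e + t) := by
      rw [h2, hcv, Units.val_mul]; ring
    rw [hfac]
    apply Units.mul_left_dvd.mpr
    apply pow_dvd_pow
    have h1 : ((1 + e + t : ℕ) : ℤ) = l + 3 * (e : ℤ) + 1 := by push_cast; omega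
    have h2' : (l + 3 * (e : ℤ) + 1).toNat = 1 + e + t := by
      rw [← h1, Int.toNat_natCast]
    calc 1 + e + t = (l + 3 * (e : ℤ) + 1).toNat := h2'.symm
      _ ≤ lam := le_max_left _ _
  · intro hq B hB hBdet hBinv _hmin A hA hdiff
    have h2u : IsUnit (2 : 𝔬) := by
      by_contra h2u
      have h2m : (2 : 𝔬) ∈ IsLocalRing.maximalIdeal 𝔬 := h2u
      have h2k : (2 : IsLocalRing.ResidueField 𝔬) = 0 := by
        rw [← map_ofNat (IsLocalRing.residue 𝔬) 2]
        exact (IsLocalRing.residue_eq_zero_iff _).2 h2m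
      have : Fintype (IsLocalRing.ResidueField 𝔬) := Fintype.ofFinite _
      obtain ⟨m, hp, hcard⟩ := FiniteField.card (IsLocalRing.ResidueField 𝔬)
        (ringChar (IsLocalRing.ResidueField 𝔬))
      have hdvd2 : ringChar (IsLocalRing.ResidueField 𝔬) ∣ 2 :=
        (CharP.cast_eq_zero_iff _ (ringChar _) 2).mp (by exact_mod_cast h2k)
      have hchar : ringChar (IsLocalRing.ResidueField 𝔬) = 2 :=
        (Nat.prime_dvd_prime_iff_eq hp Nat.prime_two).mp hdvd2
      rw [Nat.card_eq_fintype_card, hcard, hchar] at hq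
      revert hq
      simp [Nat.even_pow, Nat.odd_iff, m.pos.ne']
    have he0 : e = 0 := by
      have hu : IsUnit (ϖ ^ e) := (Units.isUnit_units_mul u _).mp (h2 ▸ h2u)
      by_contra he
      exact hϖ.not_isUnit (isUnit_of_dvd_unit (dvd_pow_self ϖ he) hu)
    apply master 𝔬 F ϖ hϖ n l (l + 1) B hB hBdet hBinv A hA hdiff
    intro c hc
    obtain ⟨v, t, ht, hcv⟩ := fact_c ϖ hϖ l u e h2 c hc
    rw [he0] at ht
    push_cast at ht
    have htl : (t : ℤ) = l := by omega
    refine ⟨by omega, ?_⟩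
    have htoNat : (l + 1).toNat = t + 1 := by omega
    rw [htoNat]
    have hfac : ϖ * (2 * c) = ((u * v : 𝔬ˣ) : 𝔬) * ϖ ^ (t + 1) := by
      rw [h2, hcv, he0, Units.val_mul]; ring
    rw [hfac]
    exact Units.mul_left_dvd.mpr dvd_rfl

end
end

section
/- Assume q is even. Let K = (c_{ij}) ∈ 𝓗_2(𝔬) be a primitive unramified binary form (i.e. 2c_{12} ∈ 𝔬^×) with c_{11}c_{22} ∈ 𝔭. Then for any a, b ∈ 𝔬 with ab ∈ 𝔭, there exists U ∈ GL_2(𝔬) such that K[U] = [[a, 1/2],[1/2, b]]. -/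
noncomputable section

open Matrix

section Helpers

open Polynomial IsLocalRing

variable {𝔬 F : Type} [CommRing 𝔬] [Field F] [Algebra 𝔬 F]

lemma glequiv_trans' {ι : Type} [Fintype ι] [DecidableEq ι] {B A C : Matrix ι ι F}
    (h1 : ∃ U : Matrix ι ι 𝔬, IsUnit U.det ∧
      A = (U.map (algebraMap 𝔬 F))ᵀ * B * U.map (algebraMap 𝔬 F))
    (h2 : ∃ U : Matrix ι ι 𝔬, IsUnit U.det ∧
      C = (U.map (algebraMap 𝔬 F))ᵀ * A * U.map (algebraMap 𝔬 F)) :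
    ∃ U : Matrix ι ι 𝔬, IsUnit U.det ∧
      C = (U.map (algebraMap 𝔬 F))ᵀ * B * U.map (algebraMap 𝔬 F) := by
  obtain ⟨U, hU, rfl⟩ := h1
  obtain ⟨W, hW, rfl⟩ := h2
  refine ⟨U * W, by rw [Matrix.det_mul]; exact hU.mul hW, ?_⟩
  rw [Matrix.map_mul, Matrix.transpose_mul]
  simp only [Matrix.mul_assoc]

lemma glequiv_symm' {ι : Type} [Fintype ι] [DecidableEq ι] {B A : Matrix ι ι F}
    (h : ∃ U : Matrix ι ι 𝔬, IsUnit U.det ∧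
      A = (U.map (algebraMap 𝔬 F))ᵀ * B * U.map (algebraMap 𝔬 F)) :
    ∃ U : Matrix ι ι 𝔬, IsUnit U.det ∧
      B = (U.map (algebraMap 𝔬 F))ᵀ * A * U.map (algebraMap 𝔬 F) := by
  obtain ⟨U, hU, rfl⟩ := h
  obtain ⟨u, hu⟩ := hU
  set V : Matrix ι ι 𝔬 := (↑u⁻¹ : 𝔬) • U.adjugate with hV
  have h1 : U * V = 1 := by
    rw [hV, Matrix.mul_smul, Matrix.mul_adjugate, ← hu, smul_smul, Units.inv_mul, one_smul]
  have hdV : IsUnit V.det := by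
    have := congrArg Matrix.det h1
    rw [Matrix.det_mul, Matrix.det_one] at this
    exact IsUnit.of_mul_eq_one _ (by rw [mul_comm]; exact this)
  have hm1 : U.map (algebraMap 𝔬 F) * V.map (algebraMap 𝔬 F) = 1 := by
    rw [← Matrix.map_mul, h1, Matrix.map_one _ (map_zero _) (map_one _)]
  refine ⟨V, hdV, ?_⟩
  calc B = ((U.map (algebraMap 𝔬 F)) * (V.map (algebraMap 𝔬 F)))ᵀ * B *
            ((U.map (algebraMap 𝔬 F)) * (V.map (algebraMap 𝔬 F))) := by rw [hm1]; simp
    _ = (V.map (algebraMap 𝔬 F))ᵀ *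
          ((U.map (algebraMap 𝔬 F))ᵀ * B * U.map (algebraMap 𝔬 F)) * V.map (algebraMap 𝔬 F) := by
        rw [Matrix.transpose_mul]; simp only [Matrix.mul_assoc]

lemma hyp_step [IsLocalRing 𝔬] [IsAdicComplete (IsLocalRing.maximalIdeal 𝔬) 𝔬]
    (h2 : (2 : F) ≠ 0) (a b : 𝔬) (hab : a * b ∈ IsLocalRing.maximalIdeal 𝔬) :
    ∃ U : Matrix (Fin 2) (Fin 2) 𝔬, IsUnit U.det ∧
      (!![algebraMap 𝔬 F a, (2:F)⁻¹; (2:F)⁻¹, algebraMap 𝔬 F b]) =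
        (U.map (algebraMap 𝔬 F))ᵀ * (!![0, (2:F)⁻¹; (2:F)⁻¹, 0]) * U.map (algebraMap 𝔬 F) := by
  set f : Polynomial 𝔬 := X ^ 2 - X + C (a * b) with hf
  have hmonic : f.Monic := by
    rw [hf]
    monicity!
  have heval : f.eval 0 ∈ maximalIdeal 𝔬 := by simpa [hf] using hab
  have hder : IsUnit (Ideal.Quotient.mk (maximalIdeal 𝔬) (f.derivative.eval 0)) := by
    have : f.derivative.eval 0 = -1 := by simp [hf]
    rw [this, map_neg, _root_.map_one]
    exact isUnit_one.neg
  obtain ⟨z, hroot, hz⟩ := HenselianRing.is_henselian f hmonic 0 heval hder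
  rw [sub_zero] at hz
  have hzeq : z ^ 2 - z + a * b = 0 := by simpa [hf, Polynomial.IsRoot] using hroot
  have hwu : IsUnit (1 - z) :=
    IsLocalRing.isUnit_one_sub_self_of_mem_nonunits z ((mem_maximalIdeal _).mp hz)
  obtain ⟨vi, hvi⟩ : ∃ vi : 𝔬, (1 - z) * vi = 1 := by
    obtain ⟨v, hv⟩ := hwu
    exact ⟨↑v⁻¹, by rw [← hv]; exact Units.mul_inv v⟩
  have hab' : a * b = z * (1 - z) := by linear_combination hzeq
  have hay : a * (b * vi) = z := by
    have h' : a * (b * vi) = z * ((1 - z) * vi) := by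
      rw [show a * (b * vi) = a * b * vi from by ring, hab']; ring
    rw [h', hvi, mul_one]
  have hwy : (1 - z) * (b * vi) = b := by
    rw [show (1 - z) * (b * vi) = b * ((1 - z) * vi) from by ring, hvi, mul_one]
  refine ⟨!![a, 1 - z; 1, b * vi], ?_, ?_⟩
  · rw [Matrix.det_fin_two_of]
    have h1 : a * (b * vi) - (1 - z) * 1 = -(1 - (z + z)) := by rw [hay]; ring
    rw [h1]
    exact (IsLocalRing.isUnit_one_sub_self_of_mem_nonunits _
      ((mem_maximalIdeal _).mp (Ideal.add_mem _ hz hz))).neg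
  · have HAY := congrArg (algebraMap 𝔬 F) hay
    have HWY := congrArg (algebraMap 𝔬 F) hwy
    simp only [_root_.map_mul, _root_.map_sub, _root_.map_one] at HAY HWY
    ext i j
    fin_cases i <;> fin_cases j <;>
      simp [Matrix.mul_apply, Fin.sum_univ_two, _root_.map_mul, _root_.map_sub,
        _root_.map_one]
    all_goals field_simp
    all_goals try ring
    all_goals try linear_combination -HAY
    all_goals try linear_combination -2 * HWY

end Helpers

theorem statement_17
    (𝔬 : Type) [CommRing 𝔬] [IsDomain 𝔬] [IsDiscreteValuationRing 𝔬]
    [IsAdicComplete (IsLocalRing.maximalIdeal 𝔬) 𝔬]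
    [Finite (IsLocalRing.ResidueField 𝔬)]
    (F : Type) [Field F] [Algebra 𝔬 F] [IsFractionRing 𝔬 F] [CharZero F]
    (ϖ : 𝔬) (hϖ : Irreducible ϖ)
    (hq : Even (Nat.card (IsLocalRing.ResidueField 𝔬)))
    (K : Matrix (Fin 2) (Fin 2) F) (hK : IsHalfIntegral 𝔬 K)
    (hprim : ∃ d : 𝔬, IsUnit d ∧ 2 * K 0 1 = algebraMap 𝔬 F d)
    (hdiag : MemPi ϖ 1 (K 0 0 * K 1 1))
    (a b : 𝔬) (hab : ϖ ∣ a * b) :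
    ∃ U : Matrix (Fin 2) (Fin 2) 𝔬, IsUnit U.det ∧
      (U.map (algebraMap 𝔬 F))ᵀ * K * U.map (algebraMap 𝔬 F) =
        !![algebraMap 𝔬 F a, (2 : F)⁻¹; (2 : F)⁻¹, algebraMap 𝔬 F b] := by
  obtain ⟨e, he⟩ : ∃ d : 𝔬, K 0 0 * K 1 1 = algebraMap 𝔬 F (ϖ ^ 1 * d) := hdiag
  have h2 : (2 : F) ≠ 0 := two_ne_zero
  obtain ⟨hsymm, hdiagInt, -⟩ := hK
  obtain ⟨c, hc⟩ := hdiagInt 0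
  obtain ⟨d, hd⟩ := hdiagInt 1
  obtain ⟨u, hu, hu2⟩ := hprim
  have hK10 : K 1 0 = K 0 1 := by
    have h' := congrFun (congrFun hsymm 1) 0
    simpa [Matrix.transpose_apply] using h'.symm
  have hcd : ϖ ∣ c * d := by
    refine ⟨e, IsFractionRing.injective 𝔬 F ?_⟩
    rw [_root_.map_mul, ← hc, ← hd, he, pow_one]
  obtain ⟨t, htu⟩ : ∃ t, u * t = 1 := by
    obtain ⟨uu, rfl⟩ := hu
    exact ⟨↑uu⁻¹, Units.mul_inv uu⟩
  have hϖm : ϖ ∈ IsLocalRing.maximalIdeal 𝔬 :=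
    (IsLocalRing.mem_maximalIdeal _).mpr hϖ.not_isUnit
  have habm : a * b ∈ IsLocalRing.maximalIdeal 𝔬 := by
    obtain ⟨k, hk⟩ := hab
    rw [hk]
    exact Ideal.mul_mem_right _ _ hϖm
  have hcdm : c * (d * t * t) ∈ IsLocalRing.maximalIdeal 𝔬 := by
    obtain ⟨k, hk⟩ := hcd
    rw [show c * (d * t * t) = c * d * (t * t) from by ring, hk]
    exact Ideal.mul_mem_right _ _ (Ideal.mul_mem_right _ _ hϖm)
  have hoffT : K 0 1 * algebraMap 𝔬 F t = (2 : F)⁻¹ := by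
    have h1 : (2 : F) * (K 0 1 * algebraMap 𝔬 F t) = 1 := by
      rw [← mul_assoc, hu2, ← _root_.map_mul, htu, _root_.map_one]
    exact (inv_eq_of_mul_eq_one_right h1).symm
  have step1 : ∃ U : Matrix (Fin 2) (Fin 2) 𝔬, IsUnit U.det ∧
      (!![algebraMap 𝔬 F c, (2:F)⁻¹; (2:F)⁻¹, algebraMap 𝔬 F (d * t * t)]) =
        (U.map (algebraMap 𝔬 F))ᵀ * K * U.map (algebraMap 𝔬 F) := by
    refine ⟨!![1, 0; 0, t], ?_, ?_⟩
    · rw [Matrix.det_fin_two_of]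
      simpa using IsUnit.of_mul_eq_one (a := t) u (by rw [mul_comm]; exact htu)
    · ext i j
      fin_cases i <;> fin_cases j <;>
        simp [Matrix.mul_apply, Fin.sum_univ_two, _root_.map_mul, hc, hd, hK10, hoffT]
      · rw [← hoffT]; ring
      · exact Or.inl (mul_comm _ _)
  have step2 := hyp_step (𝔬 := 𝔬) (F := F) h2 c (d * t * t) hcdm
  have step3 := hyp_step (𝔬 := 𝔬) (F := F) h2 a b habm
  obtain ⟨U, hU, hEq⟩ := glequiv_trans' step1 (glequiv_trans' (glequiv_symm' step2) step3)
  exact ⟨U, hU, hEq.symm⟩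




end
end
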